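/- Suppose m ≥ 2. There is no vector E = n·s + d·f − Σ_{i=1}^m r_i·e_i ∈ Λ_m satisfying all of: ⟨E, E⟩ = −1, ⟨E, K⟩ = −1, ⟨E, f⟩ ≥ 0, ⟨E, e_m⟩ ≥ 0, and ⟨E, σ⟩ ≥ 0 for every even simple root σ. (Equivalently: a class with E² = E·K = −1 and E·f ≥ 0 lying in the fundamental chamber must satisfy ⟨E, e_m⟩ < 0, i.e. must equal e_m; this is the key step in proving that any two blowdown structures of the same parity on a rational surface are connected by reflections in ineffective simple roots.) -/

import Mathlib

/-- The basis vector `s` of the lattice `Λ_m = ℤ^{m+2}` (coordinate 0). -/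
def sV (m : ℕ) : Fin (m + 2) → ℤ := fun i => if (i : ℕ) = 0 then 1 else 0

/-- The basis vector `f` of the lattice `Λ_m = ℤ^{m+2}` (coordinate 1). -/
def fV (m : ℕ) : Fin (m + 2) → ℤ := fun i => if (i : ℕ) = 1 then 1 else 0

/-- The basis vector `e_j` (for `1 ≤ j ≤ m`) of the lattice `Λ_m = ℤ^{m+2}`
(coordinate `j+1`). -/
def eV (m j : ℕ) : Fin (m + 2) → ℤ := fun i => if (i : ℕ) = j + 1 then 1 else 0

/-- The even intersection form on `Λ_m`: `⟨s,s⟩ = 0`, `⟨s,f⟩ = 1`, `⟨f,f⟩ = 0`,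
`⟨s,e_i⟩ = ⟨f,e_i⟩ = 0`, `⟨e_i,e_j⟩ = −δ_{ij}`. -/
def evenForm (m : ℕ) (u v : Fin (m + 2) → ℤ) : ℤ :=
  u 0 * v 1 + u 1 * v 0 - ∑ i : Fin (m + 2), if 2 ≤ (i : ℕ) then u i * v i else 0

/-- The canonical class `K = −2s − 2f + Σ_{i=1}^m e_i` (even case). -/
def evenK (m : ℕ) : Fin (m + 2) → ℤ :=
  (-2 : ℤ) • sV m + (-2 : ℤ) • fV m + ∑ j ∈ Finset.Icc 1 m, eV m j

/-- The even simple roots: `σ_0 = s − f`, `σ_1 = f − e_1 − e_2`,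
`σ_k = e_{k−1} − e_k` for `2 ≤ k ≤ m`. -/
def evenRoot (m k : ℕ) : Fin (m + 2) → ℤ :=
  if k = 0 then sV m - fV m
  else if k = 1 then fV m - eV m 1 - eV m 2
  else eV m (k - 1) - eV m k

lemma evenForm_tail (m : ℕ) (u v : Fin (m+2) → ℤ) :
    evenForm m u v = u 0 * v 1 + u 1 * v 0 - ∑ i : Fin m, u i.succ.succ * v i.succ.succ := by
  unfold evenForm
  rw [Fin.sum_univ_succ, Fin.sum_univ_succ]
  simp [Fin.val_succ]

lemma evenK_zero (m : ℕ) : evenK m 0 = -2 := by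
  simp [evenK, Finset.sum_apply, eV, sV, fV]

lemma evenK_one (m : ℕ) : evenK m 1 = -2 := by
  simp [evenK, Finset.sum_apply, eV, sV, fV, Fin.val_one]

lemma evenK_tail (m : ℕ) (i : Fin m) : evenK m i.succ.succ = 1 := by
  have hval : ((i.succ.succ : Fin (m+2)) : ℕ) = (i : ℕ) + 2 := by simp [Fin.val_succ]
  simp only [evenK, Pi.add_apply, Pi.smul_apply, smul_eq_mul, Finset.sum_apply, sV, fV, eV, hval]
  rw [Finset.sum_congr rfl (g := fun j => if j = (i:ℕ)+1 then (1:ℤ) else 0)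
    (fun j _ => by split <;> split <;> omega)]
  rw [Finset.sum_ite_eq' (Finset.Icc 1 m) ((i:ℕ)+1) (fun _ => (1:ℤ))]
  have : (i:ℕ)+1 ∈ Finset.Icc 1 m := by simp only [Finset.mem_Icc]; omega
  simp [this]

lemma evenForm_sub (m : ℕ) (u v w : Fin (m+2) → ℤ) :
    evenForm m u (v - w) = evenForm m u v - evenForm m u w := by
  simp only [evenForm_tail, Pi.sub_apply]
  rw [Finset.sum_congr rfl (g := fun i : Fin m =>
      u i.succ.succ * v i.succ.succ - u i.succ.succ * w i.succ.succ) (fun i _ => by ring),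
    Finset.sum_sub_distrib]
  ring

lemma evenForm_sV (m : ℕ) (u : Fin (m+2) → ℤ) : evenForm m u (sV m) = u 1 := by
  rw [evenForm_tail]; simp [sV, Fin.val_one, Fin.val_succ]

lemma evenForm_fV (m : ℕ) (u : Fin (m+2) → ℤ) : evenForm m u (fV m) = u 0 := by
  rw [evenForm_tail]; simp [fV, Fin.val_one, Fin.val_succ]

lemma evenForm_eV (m : ℕ) (u : Fin (m+2) → ℤ) (j : ℕ) (h1 : 1 ≤ j) (h2 : j ≤ m) :
    evenForm m u (eV m j) = - u ⟨j+1, by omega⟩ := by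
  rw [evenForm_tail]
  have h0 : eV m j 1 = 0 := by
    simp only [eV, Fin.val_one]
    exact if_neg (by omega)
  have h0' : eV m j 0 = 0 := by
    simp only [eV, Fin.val_zero]
    exact if_neg (by omega)
  have hsum : ∑ i : Fin m, u i.succ.succ * eV m j i.succ.succ = u ⟨j+1, by omega⟩ := by
    rw [Finset.sum_eq_single (⟨j-1, by omega⟩ : Fin m)]
    · have hv : ((⟨j-1, by omega⟩ : Fin m).succ.succ : Fin (m+2)) = ⟨j+1, by omega⟩ :=
        Fin.ext (by simp [Fin.val_succ]; omega)
      rw [hv]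
      simp [eV]
    · intro b _ hb
      have hz : eV m j b.succ.succ = 0 := by
        simp only [eV, Fin.val_succ]
        rw [if_neg]
        intro h
        exact hb (Fin.ext (by simp only [Fin.val_mk]; omega))
      rw [hz, mul_zero]
    · intro h
      exact absurd (Finset.mem_univ _) h
  rw [h0, h0', hsum]; ring

lemma evenForm_root0 (m : ℕ) (u : Fin (m+2) → ℤ) :
    evenForm m u (evenRoot m 0) = u 1 - u 0 := by
  rw [show evenRoot m 0 = sV m - fV m from rfl]
  rw [evenForm_sub, evenForm_sV, evenForm_fV]

lemma evenForm_root1 (m : ℕ) (u : Fin (m+2) → ℤ) (hm : 2 ≤ m) :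
    evenForm m u (evenRoot m 1) = u 0 + u ⟨2, by omega⟩ + u ⟨3, by omega⟩ := by
  rw [show evenRoot m 1 = fV m - eV m 1 - eV m 2 from rfl]
  rw [evenForm_sub, evenForm_sub, evenForm_fV,
    evenForm_eV m u 1 le_rfl (by omega), evenForm_eV m u 2 (by omega) hm]
  ring

lemma evenForm_rootk (m : ℕ) (u : Fin (m+2) → ℤ) (k : ℕ) (h2 : 2 ≤ k) (hk : k ≤ m) :
    evenForm m u (evenRoot m k) = u ⟨k+1, by omega⟩ - u ⟨k, by omega⟩ := by
  have : evenRoot m k = eV m (k-1) - eV m k := by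
    unfold evenRoot
    rw [if_neg (by omega), if_neg (by omega)]
  rw [this, evenForm_sub, evenForm_eV m u (k-1) (by omega) (by omega),
    evenForm_eV m u k (by omega) hk]
  have : (⟨k-1+1, by omega⟩ : Fin (m+2)) = ⟨k, by omega⟩ := Fin.ext (by simp; omega)
  rw [this]
  ring


lemma splitQ (mm : ℕ) (E : Fin (mm+2+2) → ℤ) :
    ∑ i : Fin (mm+2), E i.succ.succ * E i.succ.succ
      = E ⟨2, by omega⟩ * E ⟨2, by omega⟩ + E ⟨3, by omega⟩ * E ⟨3, by omega⟩
        + ∑ i : Fin mm, E ⟨(i:ℕ)+4, by omega⟩ * E ⟨(i:ℕ)+4, by omega⟩ := by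
  have e2 : ((0 : Fin (mm+2)).succ.succ : Fin (mm+2+2)) = ⟨2, by omega⟩ := by
    apply Fin.ext; simp
  have e3 : (((0 : Fin (mm+1)).succ : Fin (mm+2)).succ.succ : Fin (mm+2+2)) = ⟨3, by omega⟩ := by
    apply Fin.ext; simp
  have e4 : ∀ i : Fin mm, (((i.succ.succ : Fin (mm+2))).succ.succ : Fin (mm+2+2))
      = ⟨(i:ℕ)+4, by omega⟩ := by
    intro i; apply Fin.ext; simp
  rw [Fin.sum_univ_succ, Fin.sum_univ_succ, e2, e3]
  rw [Finset.sum_congr rfl (g := fun i : Fin mm =>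
      E ⟨(i:ℕ)+4, by omega⟩ * E ⟨(i:ℕ)+4, by omega⟩) (fun i _ => by rw [e4 i])]
  ring

lemma splitP (mm : ℕ) (E : Fin (mm+2+2) → ℤ) :
    ∑ i : Fin (mm+2), E i.succ.succ
      = E ⟨2, by omega⟩ + E ⟨3, by omega⟩ + ∑ i : Fin mm, E ⟨(i:ℕ)+4, by omega⟩ := by
  have e2 : ((0 : Fin (mm+2)).succ.succ : Fin (mm+2+2)) = ⟨2, by omega⟩ := by
    apply Fin.ext; simp
  have e3 : (((0 : Fin (mm+1)).succ : Fin (mm+2)).succ.succ : Fin (mm+2+2)) = ⟨3, by omega⟩ := by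
    apply Fin.ext; simp
  have e4 : ∀ i : Fin mm, (((i.succ.succ : Fin (mm+2))).succ.succ : Fin (mm+2+2))
      = ⟨(i:ℕ)+4, by omega⟩ := by
    intro i; apply Fin.ext; simp
  rw [Fin.sum_univ_succ, Fin.sum_univ_succ, e2, e3]
  rw [Finset.sum_congr rfl (g := fun i : Fin mm =>
      E ⟨(i:ℕ)+4, by omega⟩) (fun i _ => by rw [e4 i])]
  ring

lemma tail_bound (mm : ℕ) (E : Fin (mm+2+2) → ℤ)
    (h3 : ∀ i : Fin mm, E ⟨3, by omega⟩ ≤ E ⟨(i:ℕ)+4, by omega⟩)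
    (h0 : ∀ i : Fin mm, E ⟨(i:ℕ)+4, by omega⟩ ≤ 0) :
    ∑ i : Fin mm, E ⟨(i:ℕ)+4, by omega⟩ * E ⟨(i:ℕ)+4, by omega⟩
      ≤ E ⟨3, by omega⟩ * ∑ i : Fin mm, E ⟨(i:ℕ)+4, by omega⟩ := by
  rw [Finset.mul_sum]
  apply Finset.sum_le_sum
  intro i _
  nlinarith [h3 i, h0 i]

lemma evenForm_evenK (m : ℕ) (u : Fin (m+2) → ℤ) :
    evenForm m u (evenK m) = u 0 * (-2) + u 1 * (-2) - ∑ i : Fin m, u i.succ.succ := by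
  rw [evenForm_tail, evenK_zero, evenK_one]
  rw [Finset.sum_congr rfl (g := fun i : Fin m => u i.succ.succ)
    (fun i _ => by rw [evenK_tail]; ring)]

/-- For `m ≥ 2`, there is no vector `E ∈ Λ_m` satisfying all of: `⟨E, E⟩ = −1`,
`⟨E, K⟩ = −1`, `⟨E, f⟩ ≥ 0`, `⟨E, e_m⟩ ≥ 0`, and `⟨E, σ⟩ ≥ 0` for every even simple
root `σ`.  (A class with `E² = E·K = −1` and `E·f ≥ 0` lying in the fundamental chamber
must equal `e_m`.) -/
theorem no_neg_one_class_in_fundamental_chamber (m : ℕ) (hm : 2 ≤ m) :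
    ¬ ∃ E : Fin (m + 2) → ℤ,
        evenForm m E E = -1 ∧
        evenForm m E (evenK m) = -1 ∧
        0 ≤ evenForm m E (fV m) ∧
        0 ≤ evenForm m E (eV m m) ∧
        (∀ k, k ≤ m → 0 ≤ evenForm m E (evenRoot m k)) := by
  rintro ⟨E, hEE, hEK, hEf, hEem, hroots⟩
  obtain ⟨mm, rfl⟩ : ∃ mm, m = mm + 2 := ⟨m - 2, by omega⟩
  rw [evenForm_tail] at hEE
  rw [evenForm_evenK] at hEK
  have hn : 0 ≤ E 0 := by rwa [evenForm_fV] at hEf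
  have hd : E 0 ≤ E 1 := by
    have h := hroots 0 (by omega)
    rw [evenForm_root0] at h; linarith
  have hσ1 : 0 ≤ E 0 + E ⟨2, by omega⟩ + E ⟨3, by omega⟩ := by
    have h := hroots 1 (by omega)
    rwa [evenForm_root1 _ _ (by omega)] at h
  have hstep : ∀ k : ℕ, ∀ _h2 : 2 ≤ k, ∀ _hk : k ≤ mm + 2,
      E ⟨k, by omega⟩ ≤ E ⟨k+1, by omega⟩ := by
    intro k h2 hk
    have h := hroots k hk
    rw [evenForm_rootk _ _ k h2 hk] at h
    linarith
  have hmono : ∀ q : ℕ, ∀ _hq : q ≤ mm + 3, ∀ p : ℕ, ∀ _hp : 2 ≤ p, ∀ _hpq : p ≤ q,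
      E ⟨p, by omega⟩ ≤ E ⟨q, by omega⟩ := by
    intro q
    induction q with
    | zero => intro h p hp hpq; omega
    | succ t ih =>
      intro h p hp hpq
      rcases Nat.lt_or_ge p (t+1) with hlt | hge
      · have h1 : E ⟨p, by omega⟩ ≤ E ⟨t, by omega⟩ := ih (by omega) p hp (by omega)
        have h2 : E ⟨t, by omega⟩ ≤ E ⟨t+1, by omega⟩ := hstep t (by omega) (by omega)
        exact le_trans h1 h2
      · have hpe : p = t + 1 := by omega
        subst hpe
        exact le_rfl
  have hlast : E ⟨mm+3, by omega⟩ ≤ 0 := by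
    have h := hEem
    rw [evenForm_eV (mm+2) E (mm+2) (by omega) (by omega)] at h
    linarith
  have hQ := splitQ mm E
  have hP := splitP mm E
  have hT := tail_bound mm E
    (fun i => hmono ((i:ℕ)+4) (by omega) 3 (by omega) (by omega))
    (fun i => le_trans (hmono (mm+3) (by omega) ((i:ℕ)+4) (by omega) (by omega)) hlast)
  have hAB : E ⟨2, by omega⟩ ≤ E ⟨3, by omega⟩ := hmono 3 (by omega) 2 (by omega) (by omega)
  have hB0 : E ⟨3, by omega⟩ ≤ 0 :=
    le_trans (hmono (mm+3) (by omega) 3 (by omega) (by omega)) hlast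
  have htP : ∑ i : Fin mm, E ⟨(i:ℕ)+4, by omega⟩
      = (1 - 2 * E 0 - 2 * E 1) - E ⟨2, by omega⟩ - E ⟨3, by omega⟩ := by
    linarith
  rw [htP] at hT
  clear hEf hEem hroots hEK hP hstep hmono htP hlast
  have hA : E ⟨2, by omega⟩ ≤ 0 := le_trans hAB hB0
  nlinarith [hT, hQ, hEE, hσ1, hn, hd, hAB, hB0, hA,
    mul_nonneg (by linarith : (0:ℤ) ≤ E 1 - E 0) (by linarith : (0:ℤ) ≤ E 0 + E ⟨3, by omega⟩),
    mul_nonneg hn (by linarith : (0:ℤ) ≤ E 0 + E ⟨2, by omega⟩ + E ⟨3, by omega⟩),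
    mul_nonneg (by linarith : (0:ℤ) ≤ E 0 + E ⟨2, by omega⟩)
      (by linarith : (0:ℤ) ≤ E ⟨3, by omega⟩ - E ⟨2, by omega⟩),
    mul_nonneg (by linarith : (0:ℤ) ≤ -E ⟨2, by omega⟩)
      (by linarith : (0:ℤ) ≤ E ⟨3, by omega⟩ - E ⟨2, by omega⟩)]
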